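/- Let Q ⊆ H be a closed convex set with nonempty interior containing no straight line, let f be a ν-self-concordant barrier for Q with nondegenerate Hessian on int Q, let b ∈ H, f* = max{⟨b,u⟩ : u ∈ Q} attained at y_* ∈ Q, and let G : H → H be a self-adjoint positive definite operator. Assume the sharp-maximum condition: there is γ_d > 0 with f* − ⟨b,u⟩ ≥ γ_d ‖u − y_*‖_G for all u ∈ Q. Then for every y ∈ int Q, [∇²f(y)]⁻¹ ⪯ (4/γ_d²)·(f* − ⟨b,y⟩)²·G⁻¹ in the Loewner order. -/

import Mathlib

open Set Filter Topology RealInnerProductSpace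

noncomputable section

/-- The Hessian of `f` at `x`, as a continuous linear map (the derivative of the gradient). -/
def hess {E : Type*} [NormedAddCommGroup E] [InnerProductSpace ℝ E] [CompleteSpace E]
    (f : E → ℝ) (x : E) : E →L[ℝ] E :=
  fderiv ℝ (gradient f) x

/-- A ν-self-concordant barrier for the closed convex set `Q`: C³, convex, with positive
definite Hessians on `int Q`, self-concordant, blowing up at the boundary of `Q`, and with
`⟨∇f(y), [∇²f(y)]⁻¹ ∇f(y)⟩ ≤ ν` (expressed via the vector `w` with `∇²f(y) w = ∇f(y)`). -/
structure IsSCBarrier {E : Type*} [NormedAddCommGroup E] [InnerProductSpace ℝ E]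
    [CompleteSpace E] (Q : Set E) (f : E → ℝ) (ν : ℝ) : Prop where
  smooth : ContDiffOn ℝ 3 f (interior Q)
  convexOn : ConvexOn ℝ (interior Q) f
  hess_posdef : ∀ y ∈ interior Q, ∀ h : E, h ≠ 0 → 0 < ⟪hess f y h, h⟫
  selfConcordant : ∀ y ∈ interior Q, ∀ h : E,
    |iteratedFDeriv ℝ 3 f y ![h, h, h]| ≤ 2 * ⟪hess f y h, h⟫ ^ ((3 : ℝ) / 2)
  tendsto_atTop : ∀ z ∈ frontier Q, Tendsto f (𝓝[interior Q] z) atTop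
  grad_bound : ∀ y ∈ interior Q, ∀ w : E, hess f y w = gradient f y →
    ⟪gradient f y, w⟫ ≤ ν

section Aux
variable {E : Type*} [NormedAddCommGroup E] [InnerProductSpace ℝ E] [CompleteSpace E]

lemma hess_inner_eq (f : E → ℝ) (x h k : E) :
    ⟪hess f x h, k⟫ = fderiv ℝ (fderiv ℝ f) x h k := by
  let e : StrongDual ℝ E ≃ₗᵢ[ℝ] E := (InnerProductSpace.toDual ℝ E).symm
  have hgrad : gradient f = e ∘ (fderiv ℝ f) := rfl
  have h1 : hess f x = ((e : StrongDual ℝ E →L[ℝ] E)).comp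
      (fderiv ℝ (fderiv ℝ f) x) := by
    rw [hess, hgrad, LinearIsometryEquiv.comp_fderiv]
  rw [h1]
  exact InnerProductSpace.toDual_symm_apply

omit [CompleteSpace E] in
lemma third_deriv_eq (f : E → ℝ) (x : E) (d : E) :
    iteratedFDeriv ℝ 3 f x ![d, d, d] = fderiv ℝ (fderiv ℝ (fderiv ℝ f)) x d d d := by
  have hm : (![d,d,d] : Fin 3 → E) = fun _ => d := by
    funext i; fin_cases i <;> rfl
  rw [hm]
  have e1 : iteratedFDeriv ℝ 3 f x (fun _ => d)
      = iteratedFDeriv ℝ 2 (fun z => fderiv ℝ f z) x (fun _ => d) d :=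
    iteratedFDeriv_succ_apply_right (n := 2) (fun _ => d)
  have e2 : iteratedFDeriv ℝ 2 (fun z => fderiv ℝ f z) x (fun _ => d)
      = iteratedFDeriv ℝ 1 (fun z => fderiv ℝ (fun z => fderiv ℝ f z) z) x (fun _ => d) d :=
    iteratedFDeriv_succ_apply_right (n := 1) (fun _ => d)
  rw [e1, e2, iteratedFDeriv_one_apply]

lemma dikin {Q : Set E} {f : E → ℝ} {ν : ℝ} (hf : IsSCBarrier Q f ν)
    (hQclosed : IsClosed Q) {y : E} (hy : y ∈ interior Q) {d : E}
    (hd : ⟪hess f y d, d⟫ ≤ 1/4) : y + d ∈ Q := by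
  by_cases hd0 : d = 0
  · simpa [hd0] using interior_subset hy
  have hUopen : IsOpen (interior Q) := isOpen_interior
  -- differentiability of iterated derivatives on the interior
  have hdf : ∀ x ∈ interior Q, HasFDerivAt f (fderiv ℝ f x) x := fun x hx =>
    ((hf.smooth.contDiffAt (hUopen.mem_nhds hx)).differentiableAt (by norm_num)).hasFDerivAt
  have hcd2 : ∀ x ∈ interior Q, ContDiffAt ℝ 2 (fderiv ℝ f) x := fun x hx =>
    (hf.smooth.contDiffAt (hUopen.mem_nhds hx)).fderiv_right (m := 2) (by norm_num)
  have hdD1 : ∀ x ∈ interior Q, HasFDerivAt (fderiv ℝ f) (fderiv ℝ (fderiv ℝ f) x) x :=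
    fun x hx => ((hcd2 x hx).differentiableAt (by norm_num)).hasFDerivAt
  have hdD2 : ∀ x ∈ interior Q,
      HasFDerivAt (fderiv ℝ (fderiv ℝ f)) (fderiv ℝ (fderiv ℝ (fderiv ℝ f)) x) x :=
    fun x hx =>
      (((hcd2 x hx).fderiv_right (m := 1) (by norm_num)).differentiableAt (by norm_num)).hasFDerivAt
  -- the line
  set c : ℝ → E := fun t => y + t • d with hcdef
  have hcont : Continuous c := continuous_const.add (continuous_id.smul continuous_const)
  have hc0 : c 0 = y := by simp [hcdef]
  have hcd : ∀ t : ℝ, HasDerivAt c d t := by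
    intro t
    simpa [hcdef] using ((hasDerivAt_id t).smul_const d).const_add y
  -- abbreviations for directional derivatives along the line
  set q : ℝ → ℝ := fun t => fderiv ℝ (fderiv ℝ f) (c t) d d with hqdef
  set p : ℝ → ℝ := fun t => fderiv ℝ (fderiv ℝ (fderiv ℝ f)) (c t) d d d with hpdef
  have hqpos : ∀ t : ℝ, c t ∈ interior Q → 0 < q t := fun t ht => by
    have := hf.hess_posdef (c t) ht d hd0
    rwa [hess_inner_eq] at this
  have hsc : ∀ t : ℝ, c t ∈ interior Q → |p t| ≤ 2 * q t ^ ((3:ℝ)/2) := fun t ht => by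
    have := hf.selfConcordant (c t) ht d
    rwa [third_deriv_eq, hess_inner_eq] at this
  have hsc' : ∀ t : ℝ, c t ∈ interior Q → |p t| ≤ 2 * (q t * Real.sqrt (q t)) := by
    intro t ht
    have h32 : q t ^ ((3:ℝ)/2) = q t * Real.sqrt (q t) := by
      rw [show (3:ℝ)/2 = 1 + 1/2 by norm_num, Real.rpow_add (hqpos t ht), Real.rpow_one,
        ← Real.sqrt_eq_rpow]
    have := hsc t ht
    rwa [h32] at this
  -- derivatives along the line
  have hder1 : ∀ t : ℝ, c t ∈ interior Q →
      HasDerivAt (fun s => f (c s)) (fderiv ℝ f (c t) d) t := fun t ht =>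
    (hdf _ ht).comp_hasDerivAt t (hcd t)
  have hder2 : ∀ t : ℝ, c t ∈ interior Q →
      HasDerivAt (fun s => fderiv ℝ f (c s) d) (q t) t := by
    intro t ht
    have h1 : HasDerivAt (fun s => fderiv ℝ f (c s)) (fderiv ℝ (fderiv ℝ f) (c t) d) t :=
      (hdD1 _ ht).comp_hasDerivAt t (hcd t)
    simpa using h1.clm_apply (hasDerivAt_const t d)
  have hder3 : ∀ t : ℝ, c t ∈ interior Q → HasDerivAt q (p t) t := by
    intro t ht
    have h1 : HasDerivAt (fun s => fderiv ℝ (fderiv ℝ f) (c s))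
        (fderiv ℝ (fderiv ℝ (fderiv ℝ f)) (c t) d) t :=
      HasFDerivAt.comp_hasDerivAt (E := E →L[ℝ] E →L[ℝ] ℝ) t (hdD2 _ ht) (hcd t)
    have h2 := h1.clm_apply (hasDerivAt_const t d)
    simpa using h2.clm_apply (hasDerivAt_const t d)
  -- main contradiction argument
  by_contra hcontra
  have hex : ∃ t ∈ Icc (0:ℝ) 1, c t ∉ interior Q := by
    refine ⟨1, by norm_num, fun h1 => hcontra ?_⟩
    have hc1 : c 1 = y + d := by simp [hcdef]
    rw [← hc1]; exact interior_subset h1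
  obtain ⟨t₀, ht₀, ht₀U⟩ := hex
  set K : Set ℝ := Icc (0:ℝ) 1 ∩ c ⁻¹' (interior Q)ᶜ with hKdef
  have hKcl : IsClosed K := isClosed_Icc.inter (hUopen.isClosed_compl.preimage hcont)
  have hKne : K.Nonempty := ⟨t₀, ht₀, ht₀U⟩
  have hKbdd : BddBelow K := ⟨0, fun t ht => ht.1.1⟩
  set T := sInf K with hTdef
  have hTK : T ∈ K := hKcl.csInf_mem hKne hKbdd
  have hT1 : T ≤ 1 := hTK.1.2
  have hTnn : 0 ≤ T := hTK.1.1
  have hT0 : 0 < T :=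
    lt_of_le_of_ne hTnn (fun h => hTK.2 (by rw [← h, hc0]; exact hy))
  have hbelow : ∀ s : ℝ, 0 ≤ s → s < T → c s ∈ interior Q := by
    intro s hs0 hsT
    by_contra hsU
    exact absurd (csInf_le hKbdd ⟨⟨hs0, hsT.le.trans hT1⟩, hsU⟩) (not_le.mpr hsT)
  have hdq : q 0 ≤ 1/4 := by
    simp only [hqdef, hc0]
    rw [← hess_inner_eq]; exact hd
  -- bound on the second derivative along the line
  have hq1 : ∀ s : ℝ, 0 ≤ s → s < T → q s ≤ 1 := by
    intro s hs0 hsT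
    have hmem : ∀ t ∈ Icc (0:ℝ) s, c t ∈ interior Q := fun t ht =>
      hbelow t ht.1 (lt_of_le_of_lt ht.2 hsT)
    set ψ : ℝ → ℝ := fun t => (Real.sqrt (q t))⁻¹ with hψdef
    set ψ' : ℝ → ℝ := fun t => -(1 / (2 * Real.sqrt (q t)) * p t) / Real.sqrt (q t) ^ 2
      with hψ'def
    have hψder : ∀ t ∈ Icc (0:ℝ) s, HasDerivAt ψ (ψ' t) t := by
      intro t ht
      have hq := hqpos t (hmem t ht)
      have h1 : HasDerivAt (fun u => Real.sqrt (q u)) (1 / (2 * Real.sqrt (q t)) * p t) t :=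
        (Real.hasDerivAt_sqrt (ne_of_gt hq)).comp t (hder3 t (hmem t ht))
      exact h1.inv (ne_of_gt (Real.sqrt_pos.mpr hq))
    have hψbound : ∀ t ∈ Ico (0:ℝ) s, ‖ψ' t‖ ≤ 1 := by
      intro t ht
      have htmem := hmem t ⟨ht.1, ht.2.le⟩
      have hq := hqpos t htmem
      have hsq : 0 < Real.sqrt (q t) := Real.sqrt_pos.mpr hq
      have hqq : Real.sqrt (q t) * Real.sqrt (q t) = q t := Real.mul_self_sqrt hq.le
      have hp := hsc' t htmem
      rw [Real.norm_eq_abs, hψ'def]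
      rw [abs_div, abs_neg, abs_mul]
      rw [abs_of_pos (by positivity : (0:ℝ) < 1 / (2 * Real.sqrt (q t)))]
      rw [abs_of_pos (by positivity : (0:ℝ) < Real.sqrt (q t) ^ 2)]
      rw [div_le_one (by positivity)]
      rw [div_mul_eq_mul_div, one_mul, div_le_iff₀ (by positivity : (0:ℝ) < 2 * Real.sqrt (q t))]
      nlinarith [abs_nonneg (p t)]
    have hmv := norm_image_sub_le_of_norm_deriv_le_segment'
      (fun t ht => (hψder t ht).hasDerivWithinAt) hψbound s (right_mem_Icc.mpr hs0)
    have hq0pos : 0 < q 0 := hqpos 0 (by rw [hc0]; exact hy)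
    have hs0' : 0 < Real.sqrt (q 0) := Real.sqrt_pos.mpr hq0pos
    have hψ0 : 2 ≤ ψ 0 := by
      have h1 : Real.sqrt (q 0) ≤ 1/2 := by
        have h2 := Real.sqrt_le_sqrt hdq
        rwa [show Real.sqrt (1/4) = 1/2 by
          rw [show (1:ℝ)/4 = (1/2)^2 by norm_num, Real.sqrt_sq (by norm_num)]] at h2
      have h3 : Real.sqrt (q 0) * (Real.sqrt (q 0))⁻¹ = 1 := mul_inv_cancel₀ (ne_of_gt hs0')
      have h4 : (0:ℝ) ≤ (Real.sqrt (q 0))⁻¹ := inv_nonneg.mpr hs0'.le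
      nlinarith
    have hψs : 1 ≤ ψ s := by
      have habs : |ψ s - ψ 0| ≤ 1 * (s - 0) := by
        simpa [Real.norm_eq_abs] using hmv
      have h5 := abs_le.mp habs
      have hsle : s ≤ 1 := hsT.le.trans hT1
      linarith [h5.1]
    have hqs : 0 < q s := hqpos s (hmem s (right_mem_Icc.mpr hs0))
    have hsqs : 0 < Real.sqrt (q s) := Real.sqrt_pos.mpr hqs
    have h6 : Real.sqrt (q s) * (Real.sqrt (q s))⁻¹ = 1 := mul_inv_cancel₀ (ne_of_gt hsqs)
    have hqq : Real.sqrt (q s) * Real.sqrt (q s) = q s := Real.mul_self_sqrt hqs.le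
    nlinarith
  -- bound on the first derivative along the line
  have hg1 : ∀ s : ℝ, 0 ≤ s → s < T → |fderiv ℝ f (c s) d| ≤ |fderiv ℝ f y d| + 1 := by
    intro s hs0 hsT
    have hmem : ∀ t ∈ Icc (0:ℝ) s, c t ∈ interior Q := fun t ht =>
      hbelow t ht.1 (lt_of_le_of_lt ht.2 hsT)
    have hder : ∀ t ∈ Icc (0:ℝ) s,
        HasDerivWithinAt (fun u => fderiv ℝ f (c u) d) (q t) (Icc 0 s) t :=
      fun t ht => (hder2 t (hmem t ht)).hasDerivWithinAt
    have hbound : ∀ t ∈ Ico (0:ℝ) s, ‖q t‖ ≤ 1 := by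
      intro t ht
      have h1 := hq1 t ht.1 (lt_trans ht.2 hsT)
      have h2 := hqpos t (hmem t ⟨ht.1, ht.2.le⟩)
      rw [Real.norm_eq_abs, abs_of_pos h2]; exact h1
    have hmv := norm_image_sub_le_of_norm_deriv_le_segment' hder hbound s
      (right_mem_Icc.mpr hs0)
    simp only [Real.norm_eq_abs, hc0] at hmv
    have hsle : s ≤ 1 := hsT.le.trans hT1
    have h7 := abs_sub_abs_le_abs_sub (fderiv ℝ f (c s) d) (fderiv ℝ f y d)
    linarith
  -- bound on f along the line
  have hfb : ∀ s : ℝ, 0 ≤ s → s < T → f (c s) ≤ f y + (|fderiv ℝ f y d| + 1) := by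
    intro s hs0 hsT
    have hmem : ∀ t ∈ Icc (0:ℝ) s, c t ∈ interior Q := fun t ht =>
      hbelow t ht.1 (lt_of_le_of_lt ht.2 hsT)
    have hder : ∀ t ∈ Icc (0:ℝ) s,
        HasDerivWithinAt (fun u => f (c u)) (fderiv ℝ f (c t) d) (Icc 0 s) t :=
      fun t ht => (hder1 t (hmem t ht)).hasDerivWithinAt
    have hbound : ∀ t ∈ Ico (0:ℝ) s, ‖fderiv ℝ f (c t) d‖ ≤ |fderiv ℝ f y d| + 1 := by
      intro t ht
      rw [Real.norm_eq_abs]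
      exact hg1 t ht.1 (lt_trans ht.2 hsT)
    have hmv := norm_image_sub_le_of_norm_deriv_le_segment' hder hbound s
      (right_mem_Icc.mpr hs0)
    simp only [Real.norm_eq_abs, hc0] at hmv
    have hsle : s ≤ 1 := hsT.le.trans hT1
    have h8 := abs_le.mp hmv
    have h9 : (0:ℝ) ≤ |fderiv ℝ f y d| + 1 := by positivity
    nlinarith [h8.1, h8.2]
  -- contradiction with the barrier blowing up at the boundary point c T
  have hnebot : (𝓝[Ico (0:ℝ) T] T).NeBot := by
    apply mem_closure_iff_nhdsWithin_neBot.mp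
    rw [closure_Ico hT0.ne]
    exact right_mem_Icc.mpr hTnn
  have h1 : Tendsto c (𝓝[Ico (0:ℝ) T] T) (𝓝 (c T)) := hcont.continuousWithinAt
  have h2 : ∀ᶠ s in 𝓝[Ico (0:ℝ) T] T, c s ∈ interior Q :=
    eventually_nhdsWithin_of_forall (fun s hs => hbelow s hs.1 hs.2)
  have htc : Tendsto c (𝓝[Ico (0:ℝ) T] T) (𝓝[interior Q] (c T)) :=
    tendsto_nhdsWithin_iff.mpr ⟨h1, h2⟩
  have hzQ : c T ∈ Q := by
    have h3 : c T ∈ closure (interior Q) := mem_closure_of_tendsto h1 h2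
    exact closure_minimal interior_subset hQclosed h3
  have hzfr : c T ∈ frontier Q := by
    rw [hQclosed.frontier_eq]
    exact ⟨hzQ, hTK.2⟩
  have htop : Tendsto (fun s => f (c s)) (𝓝[Ico (0:ℝ) T] T) atTop :=
    (hf.tendsto_atTop _ hzfr).comp htc
  have hev1 : ∀ᶠ s in 𝓝[Ico (0:ℝ) T] T, f y + (|fderiv ℝ f y d| + 1) + 1 ≤ f (c s) :=
    htop.eventually_ge_atTop _
  have hev2 : ∀ᶠ s in 𝓝[Ico (0:ℝ) T] T, f (c s) ≤ f y + (|fderiv ℝ f y d| + 1) :=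
    eventually_nhdsWithin_of_forall (fun s hs => hfb s hs.1 hs.2)
  obtain ⟨s, hs1, hs2⟩ := (hev1.and hev2).exists
  linarith

end Aux

section Aux2
variable {E : Type*} [NormedAddCommGroup E] [InnerProductSpace ℝ E]

lemma csG (G : E →L[ℝ] E) (hGsa : ∀ a b : E, ⟪G a, b⟫ = ⟪a, G b⟫)
    (hGnn : ∀ v : E, 0 ≤ ⟪G v, v⟫) (a c : E) :
    ⟪G a, c⟫ ^ 2 ≤ ⟪G a, a⟫ * ⟪G c, c⟫ := by
  have hba : ⟪G c, a⟫ = ⟪G a, c⟫ := by rw [hGsa, real_inner_comm]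
  have key : ∀ t : ℝ, 0 ≤ ⟪G c, c⟫ * (t * t) + (2 * ⟪G a, c⟫) * t + ⟪G a, a⟫ := by
    intro t
    have h0 := hGnn (a + t • c)
    have hexp : ⟪G (a + t • c), a + t • c⟫
        = ⟪G c, c⟫ * (t * t) + (2 * ⟪G a, c⟫) * t + ⟪G a, a⟫ := by
      rw [map_add, map_smul, inner_add_left, inner_add_right, inner_add_right,
        real_inner_smul_left, real_inner_smul_left, real_inner_smul_right,
        real_inner_smul_right, hba]
      ring
    rwa [hexp] at h0
  have hd := discrim_le_zero key
  rw [discrim] at hd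
  nlinarith [hd]

lemma csG_sqrt (G : E →L[ℝ] E) (hGsa : ∀ a b : E, ⟪G a, b⟫ = ⟪a, G b⟫)
    (hGnn : ∀ v : E, 0 ≤ ⟪G v, v⟫) (a c : E) :
    ⟪G a, c⟫ ≤ Real.sqrt ⟪G a, a⟫ * Real.sqrt ⟪G c, c⟫ := by
  calc ⟪G a, c⟫ ≤ |⟪G a, c⟫| := le_abs_self _
    _ = Real.sqrt (⟪G a, c⟫ ^ 2) := (Real.sqrt_sq_eq_abs _).symm
    _ ≤ Real.sqrt (⟪G a, a⟫ * ⟪G c, c⟫) := Real.sqrt_le_sqrt (csG G hGsa hGnn a c)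
    _ = _ := Real.sqrt_mul (hGnn a) _

lemma csG_triangle (G : E →L[ℝ] E) (hGsa : ∀ a b : E, ⟪G a, b⟫ = ⟪a, G b⟫)
    (hGnn : ∀ v : E, 0 ≤ ⟪G v, v⟫) (a c : E) :
    Real.sqrt ⟪G (a + c), a + c⟫ ≤ Real.sqrt ⟪G a, a⟫ + Real.sqrt ⟪G c, c⟫ := by
  have hba : ⟪G c, a⟫ = ⟪G a, c⟫ := by rw [hGsa, real_inner_comm]
  have hexp : ⟪G (a + c), a + c⟫ = ⟪G a, a⟫ + 2 * ⟪G a, c⟫ + ⟪G c, c⟫ := by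
    rw [map_add, inner_add_left, inner_add_right, inner_add_right, hba]; ring
  have hcs := csG_sqrt G hGsa hGnn a c
  have hsa : Real.sqrt ⟪G a, a⟫ * Real.sqrt ⟪G a, a⟫ = ⟪G a, a⟫ := Real.mul_self_sqrt (hGnn a)
  have hsc : Real.sqrt ⟪G c, c⟫ * Real.sqrt ⟪G c, c⟫ = ⟪G c, c⟫ := Real.mul_self_sqrt (hGnn c)
  have h1 : ⟪G (a + c), a + c⟫ ≤ (Real.sqrt ⟪G a, a⟫ + Real.sqrt ⟪G c, c⟫) ^ 2 := by
    rw [hexp]; nlinarith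
  calc Real.sqrt ⟪G (a + c), a + c⟫
      ≤ Real.sqrt ((Real.sqrt ⟪G a, a⟫ + Real.sqrt ⟪G c, c⟫) ^ 2) := Real.sqrt_le_sqrt h1
    _ = Real.sqrt ⟪G a, a⟫ + Real.sqrt ⟪G c, c⟫ := by
        rw [Real.sqrt_sq (by positivity)]

end Aux2


set_option maxHeartbeats 1000000 in
/-- Lemma `lm-Hess`. Under the sharp-maximum assumption,
`[∇²f(y)]⁻¹ ⪯ (4/γ_d²) (f* − ⟨b,y⟩)² G⁻¹`. -/
theorem inverse_hessian_bound
    {H' : Type*} [NormedAddCommGroup H'] [InnerProductSpace ℝ H'] [FiniteDimensional ℝ H']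
    (Q : Set H') (hQclosed : IsClosed Q) (hQconvex : Convex ℝ Q)
    (hQint : (interior Q).Nonempty)
    (hNoLine : ∀ y d : H', d ≠ 0 → ¬ ∀ t : ℝ, y + t • d ∈ Q)
    (f : H' → ℝ) (ν : ℝ) (hν : 0 < ν) (hf : IsSCBarrier Q f ν)
    (b : H') (fstar : ℝ) (ystar : H') (hystarQ : ystar ∈ Q)
    (hmax : ∀ u ∈ Q, ⟪b, u⟫ ≤ fstar) (hatt : ⟪b, ystar⟫ = fstar)
    (G : H' →L[ℝ] H') (hGsa : ∀ a b' : H', ⟪G a, b'⟫ = ⟪a, G b'⟫)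
    (hGpd : ∀ h : H', h ≠ 0 → 0 < ⟪G h, h⟫)
    (Ginv : H' →L[ℝ] H') (hGinv : ∀ v : H', G (Ginv v) = v ∧ Ginv (G v) = v)
    (γd : ℝ) (hγd : 0 < γd)
    (hsharp : ∀ u ∈ Q, γd * Real.sqrt ⟪G (u - ystar), u - ystar⟫ ≤ fstar - ⟪b, u⟫)
    (y : H') (hy : y ∈ interior Q)
    (W : H' →L[ℝ] H')
    (hW : ∀ v : H', hess f y (W v) = v ∧ W (hess f y v) = v) :
    ∀ h : H', ⟪W h, h⟫ ≤ 4 / γd ^ 2 * (fstar - ⟪b, y⟫) ^ 2 * ⟪Ginv h, h⟫ := by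
  intro h
  have hGnn : ∀ v : H', 0 ≤ ⟪G v, v⟫ := by
    intro v
    by_cases hv : v = 0
    · simp [hv]
    · exact (hGpd v hv).le
  set Δ : ℝ := fstar - ⟪b, y⟫ with hΔdef
  have hyQ : y ∈ Q := interior_subset hy
  have hΔnn : 0 ≤ Δ := sub_nonneg.mpr (hmax y hyQ)
  -- Step 2 : γd² G ⪯ 4 Δ² ∇²f(y)
  have key : ∀ dv : H', γd ^ 2 * ⟪G dv, dv⟫ ≤ 4 * Δ ^ 2 * ⟪hess f y dv, dv⟫ := by
    intro dv
    by_cases hdv : dv = 0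
    · simp [hdv]
    · have hq : 0 < ⟪hess f y dv, dv⟫ := hf.hess_posdef y hy dv hdv
      have hsq : 0 < Real.sqrt ⟪hess f y dv, dv⟫ := Real.sqrt_pos.mpr hq
      have hss : Real.sqrt ⟪hess f y dv, dv⟫ * Real.sqrt ⟪hess f y dv, dv⟫
          = ⟪hess f y dv, dv⟫ := Real.mul_self_sqrt hq.le
      set s : ℝ := (2 * Real.sqrt ⟪hess f y dv, dv⟫)⁻¹ with hsdef
      have hspos : 0 < s := by positivity
      have hw : ⟪hess f y (s • dv), s • dv⟫ = 1/4 := by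
        rw [map_smul, real_inner_smul_left, real_inner_smul_right]
        have h2a : s * (2 * Real.sqrt ⟪hess f y dv, dv⟫) = 1 := by
          rw [hsdef]; field_simp
        linear_combination (-(s*s)) * hss
          + ((2*s*Real.sqrt ⟪hess f y dv, dv⟫ + 1)/4) * h2a
      have hinQ₁ : y + s • dv ∈ Q := dikin hf hQclosed hy (le_of_eq hw)
      have hinQ₂ : y - s • dv ∈ Q := by
        have hw2 : ⟪hess f y (-(s • dv)), -(s • dv)⟫ ≤ 1/4 := by
          rw [map_neg, inner_neg_neg]; exact le_of_eq hw
        have h2 := dikin hf hQclosed hy hw2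
        rwa [← sub_eq_add_neg] at h2
      have h1 := hsharp _ hinQ₁
      have h2 := hsharp _ hinQ₂
      have e1 : y + s • dv - ystar = (y - ystar) + s • dv := by abel
      have e2 : y - s • dv - ystar = (y - ystar) + -(s • dv) := by abel
      rw [e1] at h1
      rw [e2] at h2
      have hb1 : fstar - ⟪b, y + s • dv⟫ = Δ - ⟪b, s • dv⟫ := by
        rw [inner_add_right, hΔdef]; ring
      have hb2 : fstar - ⟪b, y - s • dv⟫ = Δ + ⟪b, s • dv⟫ := by
        rw [inner_sub_right, hΔdef]; ring
      rw [hb1] at h1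
      rw [hb2] at h2
      -- triangle inequality in the G-seminorm
      have hneg : ⟪G (-(s • dv)), -(s • dv)⟫ = ⟪G (s • dv), s • dv⟫ := by
        rw [map_neg, inner_neg_neg]
      have hsum : ⟪G (s • dv + s • dv), s • dv + s • dv⟫ = 4 * ⟪G (s • dv), s • dv⟫ := by
        simp only [map_add, inner_add_left, inner_add_right]
        ring
      have htr : 2 * Real.sqrt ⟪G (s • dv), s • dv⟫ ≤
          Real.sqrt ⟪G ((y - ystar) + s • dv), (y - ystar) + s • dv⟫ +
          Real.sqrt ⟪G ((y - ystar) + -(s • dv)), (y - ystar) + -(s • dv)⟫ := by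
        have hrw : s • dv + s • dv = ((y - ystar) + s • dv) + -((y - ystar) + -(s • dv)) := by
          abel
        have h3 : Real.sqrt ⟪G (s • dv + s • dv), s • dv + s • dv⟫
            ≤ Real.sqrt ⟪G ((y - ystar) + s • dv), (y - ystar) + s • dv⟫ +
              Real.sqrt ⟪G ((y - ystar) + -(s • dv)), (y - ystar) + -(s • dv)⟫ := by
          rw [hrw]
          have := csG_triangle G hGsa hGnn ((y - ystar) + s • dv) (-((y - ystar) + -(s • dv)))
          rwa [map_neg, inner_neg_neg] at this
        have h4 : Real.sqrt ⟪G (s • dv + s • dv), s • dv + s • dv⟫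
            = 2 * Real.sqrt ⟪G (s • dv), s • dv⟫ := by
          rw [hsum, show (4:ℝ) * ⟪G (s • dv), s • dv⟫ = (2:ℝ)^2 * ⟪G (s • dv), s • dv⟫ by ring,
            Real.sqrt_mul (by norm_num), Real.sqrt_sq (by norm_num)]
        linarith [h3, h4.symm.le]
      -- combine
      have h5 : γd * Real.sqrt ⟪G (s • dv), s • dv⟫ ≤ Δ := by
        have h6 := mul_le_mul_of_nonneg_left htr hγd.le
        nlinarith [h1, h2]
      have h7 : γd ^ 2 * ⟪G (s • dv), s • dv⟫ ≤ Δ ^ 2 := by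
        have hle : 0 ≤ γd * Real.sqrt ⟪G (s • dv), s • dv⟫ := by positivity
        have hms : Real.sqrt ⟪G (s • dv), s • dv⟫ * Real.sqrt ⟪G (s • dv), s • dv⟫
            = ⟪G (s • dv), s • dv⟫ := Real.mul_self_sqrt (hGnn _)
        nlinarith [h5]
      have hGsm : ⟪G (s • dv), s • dv⟫ = s * s * ⟪G dv, dv⟫ := by
        rw [map_smul, real_inner_smul_left, real_inner_smul_right]; ring
      rw [hGsm] at h7
      have hss4 : s * s * (4 * ⟪hess f y dv, dv⟫) = 1 := by
        have h2a : s * (2 * Real.sqrt ⟪hess f y dv, dv⟫) = 1 := by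
          rw [hsdef]; field_simp
        linear_combination (-(4*s*s)) * hss + (2*s*Real.sqrt ⟪hess f y dv, dv⟫ + 1) * h2a
      have h8 := mul_le_mul_of_nonneg_left h7
        (by positivity : (0:ℝ) ≤ 4 * ⟪hess f y dv, dv⟫)
      have heq : 4 * ⟪hess f y dv, dv⟫ * (γd ^ 2 * (s * s * ⟪G dv, dv⟫))
          = γd ^ 2 * ⟪G dv, dv⟫ := by
        linear_combination (γd ^ 2 * ⟪G dv, dv⟫) * hss4
      linarith [h8, heq]
  -- Step 3 : invert the operator inequality via Cauchy–Schwarz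
  have hWh : hess f y (W h) = h := (hW h).1
  have hGe : G (Ginv h) = h := (hGinv h).1
  have hX : ⟪hess f y (W h), W h⟫ = ⟪W h, h⟫ := by
    rw [hWh, real_inner_comm]
  have hXnn : 0 ≤ ⟪W h, h⟫ := by
    by_cases hwh : W h = 0
    · have : h = 0 := by rw [← hWh, hwh, map_zero]
      simp [this]
    · rw [← hX]; exact (hf.hess_posdef y hy _ hwh).le
  have hYnn : 0 ≤ ⟪Ginv h, h⟫ := by
    have := hGnn (Ginv h)
    rwa [hGe, real_inner_comm] at this
  have hcs : ⟪W h, h⟫ ^ 2 ≤ ⟪G (W h), W h⟫ * ⟪Ginv h, h⟫ := by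
    have h9 := csG G hGsa hGnn (W h) (Ginv h)
    have h10 : ⟪G (W h), Ginv h⟫ = ⟪W h, h⟫ := by
      rw [hGsa, hGe]
    have h11 : ⟪G (Ginv h), Ginv h⟫ = ⟪Ginv h, h⟫ := by
      rw [hGe, real_inner_comm]
    rw [h10, h11] at h9
    exact h9
  have hkey := key (W h)
  rw [hX] at hkey
  rcases hXnn.lt_or_eq with hXpos | hX0
  · have h12 : γd ^ 2 * ⟪W h, h⟫ ^ 2 ≤ (4 * Δ ^ 2 * ⟪W h, h⟫) * ⟪Ginv h, h⟫ := by
      calc γd ^ 2 * ⟪W h, h⟫ ^ 2 ≤ γd ^ 2 * (⟪G (W h), W h⟫ * ⟪Ginv h, h⟫) :=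
            mul_le_mul_of_nonneg_left hcs (by positivity)
        _ = (γd ^ 2 * ⟪G (W h), W h⟫) * ⟪Ginv h, h⟫ := by ring
        _ ≤ (4 * Δ ^ 2 * ⟪W h, h⟫) * ⟪Ginv h, h⟫ := mul_le_mul_of_nonneg_right hkey hYnn
    rw [show 4 / γd ^ 2 * Δ ^ 2 * ⟪Ginv h, h⟫ = 4 * Δ ^ 2 * ⟪Ginv h, h⟫ / γd ^ 2 by ring,
      le_div_iff₀ (by positivity)]
    have h13 : (⟪W h, h⟫ * γd ^ 2) * ⟪W h, h⟫ ≤ (4 * Δ ^ 2 * ⟪Ginv h, h⟫) * ⟪W h, h⟫ := by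
      nlinarith [h12]
    exact le_of_mul_le_mul_right h13 hXpos
  · rw [← hX0]
    exact mul_nonneg (mul_nonneg (by positivity) (sq_nonneg Δ)) hYnn
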